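/- Let G be a graph, s and t two distinct vertices, and v a vertex of G. Suppose P is an st-path containing v whose number of vertices is minimum among all st-paths of G containing v. Then |N_G(V(P))| ≥ deg_G(v) − 2. -/

import Mathlib

open SimpleGraph

/-- The open neighborhood of a vertex set `S`: vertices outside `S` adjacent to some
vertex of `S`. -/
def openNbhd {V : Type*} (G : SimpleGraph V) (S : Set V) : Set V :=
  {v | v ∉ S ∧ ∃ w ∈ S, G.Adj v w}

/-- If `P` is an `st`-path containing `v` whose number of vertices is minimum among
all `st`-paths containing `v`, then `|N_G(V(P))| ≥ deg_G(v) − 2`. -/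
theorem stmt_14 {V : Type*} [Fintype V] (G : SimpleGraph V) (s t v : V) (hst : s ≠ t)
    (p : G.Walk s t) (hp : p.IsPath) (hv : v ∈ p.support)
    (hmin : ∀ q : G.Walk s t, q.IsPath → v ∈ q.support →
      p.support.length ≤ q.support.length) :
    (G.neighborSet v).ncard - 2 ≤ (openNbhd G {x | x ∈ p.support}).ncard := by
  classical
  obtain ⟨q, r, rfl⟩ := Walk.mem_support_iff_exists_append.mp hv
  set p := q.append r with hpdef
  have hq : q.IsPath := hp.of_append_left
  have hr : r.IsPath := hp.of_append_right
  have hpsup : p.support = q.support ++ r.support.tail := Walk.support_append q r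
  have hpnd : p.support.Nodup := hp.support_nodup
  rw [hpsup] at hpnd
  have hqnd : q.support.Nodup := hq.support_nodup
  have hrnd : r.support.Nodup := hr.support_nodup
  have hplen : p.length = q.length + r.length := Walk.length_append q r
  -- key claim
  set a := q.getVert (q.length - 1) with ha
  set b := r.getVert 1 with hb
  have key : ∀ w, G.Adj v w → w ∈ p.support → w = a ∨ w = b := by
    intro w hadj hwp
    have hwv : w ≠ v := fun h => G.irrefl (h ▸ hadj.symm)
    rw [hpsup, List.mem_append] at hwp
    rcases hwp with hwq | hwrt
    · -- w on q side
      left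
      set q1 := q.takeUntil w hwq with hq1
      set q2 := q.dropUntil w hwq with hq2
      have hspec : q1.append q2 = q := q.take_spec hwq
      have hqsup : q.support = q1.support ++ q2.support.tail := by
        rw [← hspec, Walk.support_append]
      have hlen12 : q1.length + q2.length = q.length := by
        rw [← hspec, Walk.length_append]
      have hq2pos : 1 ≤ q2.length := by
        rcases Nat.eq_zero_or_pos q2.length with h0 | h
        · exact absurd (Walk.eq_of_length_eq_zero h0) hwv
        · exact h
      -- v not in q1.support
      have hvq2t : v ∈ q2.support.tail := by
        have hv2 : v ∈ q2.support := q2.end_mem_support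
        have : q2.support = w :: q2.support.tail := q2.support_eq_cons
        rw [this, List.mem_cons] at hv2
        rcases hv2 with h | h
        · exact absurd h.symm hwv
        · exact h
      have hvq1 : v ∉ q1.support := by
        rw [hqsup] at hqnd
        exact fun h => (List.disjoint_of_nodup_append hqnd) h hvq2t
      -- the new walk
      set q' : G.Walk s t := (q1.concat hadj.symm).append r with hq'
      have hq'path : q'.IsPath := by
        apply Walk.IsPath.mk'
        rw [Walk.support_append, Walk.support_concat]
        have hq1nd : q1.support.Nodup := (hq.takeUntil hwq).support_nodup
        rw [List.append_assoc]
        rw [List.nodup_append]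
        refine ⟨hq1nd, ?_, ?_⟩
        · rw [List.nodup_append]
          refine ⟨List.nodup_singleton v, (List.nodup_append.mp hpnd).2.1, ?_⟩
          intro x hx y hy hxy
          rcases List.mem_singleton.mp hx with rfl
          exact (List.disjoint_of_nodup_append hpnd) (Walk.end_mem_support q) (hxy ▸ hy)
        · intro x hx y hy hxy
          have hxq : x ∈ q.support := q.support_takeUntil_subset hwq hx
          rcases List.mem_append.mp hy with hy | hy
          · rcases List.mem_singleton.mp hy with rfl
            exact hvq1 (hxy ▸ hx)
          · exact (List.disjoint_of_nodup_append hpnd) hxq (hxy ▸ hy)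
      have hvq' : v ∈ q'.support := by
        rw [Walk.support_append, List.mem_append]
        exact Or.inl (Walk.end_mem_support _)
      have hle := hmin q' hq'path hvq'
      rw [Walk.length_support, Walk.length_support] at hle
      have hq'len : q'.length = q1.length + 1 + r.length := by
        rw [hq', Walk.length_append, Walk.length_concat]
      have hqle : q.length ≤ q1.length + 1 := by omega
      have hq1len : q1.length + 1 = q.length := by omega
      -- conclude w = a
      have : q.getVert q1.length = w := by
        rw [← hspec, Walk.getVert_append]
        simp [Walk.getVert_zero]
      rw [ha, ← hq1len]
      simpa using this.symm
    · -- w on r side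
      right
      have hwr : w ∈ r.support := List.mem_of_mem_tail hwrt
      set r1 := r.takeUntil w hwr with hr1
      set r2 := r.dropUntil w hwr with hr2
      have hspec : r1.append r2 = r := r.take_spec hwr
      have hrsup : r.support = r1.support ++ r2.support.tail := by
        rw [← hspec, Walk.support_append]
      have hlen12 : r1.length + r2.length = r.length := by
        rw [← hspec, Walk.length_append]
      have hr1pos : 1 ≤ r1.length := by
        rcases Nat.eq_zero_or_pos r1.length with h0 | h
        · exact absurd (Walk.eq_of_length_eq_zero h0).symm hwv
        · exact h
      have hvr2 : v ∉ r2.support := by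
        intro hv2
        have : r2.support = w :: r2.support.tail := r2.support_eq_cons
        rw [this, List.mem_cons] at hv2
        rcases hv2 with h | h
        · exact hwv h.symm
        · rw [hrsup] at hrnd
          exact (List.disjoint_of_nodup_append hrnd) (Walk.start_mem_support r1) h
      have hr2sub : ∀ x ∈ r2.support, x ∈ r.support.tail := by
        intro x hx
        have hxr : x ∈ r.support := r.support_dropUntil_subset hwr hx
        have : r.support = v :: r.support.tail := r.support_eq_cons
        rw [this, List.mem_cons] at hxr
        rcases hxr with h | h
        · exact absurd (h ▸ hx) hvr2
        · exact h
      set q' : G.Walk s t := q.append (Walk.cons hadj r2) with hq'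
      have hq'path : q'.IsPath := by
        apply Walk.IsPath.mk'
        rw [Walk.support_append, Walk.support_cons, List.tail_cons]
        rw [List.nodup_append]
        refine ⟨hqnd, (hr.dropUntil hwr).support_nodup, ?_⟩
        intro x hx y hy hxy
        exact (List.disjoint_of_nodup_append hpnd) hx (hr2sub x (hxy ▸ hy))
      have hvq' : v ∈ q'.support := by
        rw [Walk.support_append, List.mem_append]
        exact Or.inl (Walk.end_mem_support _)
      have hle := hmin q' hq'path hvq'
      rw [Walk.length_support, Walk.length_support] at hle
      have hq'len : q'.length = q.length + 1 + r2.length := by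
        rw [hq', Walk.length_append, Walk.length_cons]
        omega
      have hr1len : r1.length = 1 := by omega
      have : r.getVert 1 = w := by
        rw [← hspec, Walk.getVert_append, hr1len]
        simp [Walk.getVert_zero]
      exact this.symm
  -- cardinality bookkeeping
  set T : Set V := {x | x ∈ p.support} with hT
  have hvT : v ∈ T := hv
  have hsub1 : G.neighborSet v ∩ T ⊆ {a, b} := by
    rintro x ⟨hx1, hx2⟩
    rcases key x hx1 hx2 with rfl | rfl
    · exact Or.inl rfl
    · exact Or.inr rfl
  have hsub2 : G.neighborSet v \ T ⊆ openNbhd G T := by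
    rintro x ⟨hx1, hx2⟩
    exact ⟨hx2, v, hvT, hx1.symm⟩
  have h1 : (G.neighborSet v ∩ T).ncard ≤ 2 := by
    calc (G.neighborSet v ∩ T).ncard ≤ ({a, b} : Set V).ncard :=
          Set.ncard_le_ncard hsub1 (Set.toFinite _)
      _ ≤ 2 := by
          apply le_trans (Set.ncard_insert_le a {b})
          simp [Set.ncard_singleton]
  have h2 : (G.neighborSet v \ T).ncard ≤ (openNbhd G T).ncard :=
    Set.ncard_le_ncard hsub2 (Set.toFinite _)
  have h3 : (G.neighborSet v).ncard ≤ (G.neighborSet v ∩ T).ncard +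
      (G.neighborSet v \ T).ncard := by
    conv_lhs => rw [← Set.inter_union_diff (G.neighborSet v) T]
    exact Set.ncard_union_le _ _
  omega
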